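/- Let $R$ be a reduced commutative ring, $q \geq 2$ and $n \geq 1$ integers, and let $F, P$ be $n \times n$ matrices over $R$ with $F$ invertible, satisfying $F P F^{-1} = P^q$. Suppose moreover that over every algebraically closed field $\Omega$ to which $R$ maps, the image $P_\Omega$ of $P$ has all eigenvalues equal to roots of unity of order dividing $\ell^r$ (where $\ell^r \| q^n - 1$ in the relevant arithmetic setting), and that $P$ is congruent to the identity modulo $\ell$. Then if some eigenvalue of $P_\Omega$ is nontrivial, the eigenvalues of $P_\Omega$ are $\zeta, \zeta^q, \ldots, \zeta^{q^{n-1}}$ for a single nontrivial $\ell^r$-th root of unity $\zeta$, and all coefficients of the characteristic polynomial of $F_\Omega$ vanish except the constant term (the determinant). -/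

import Mathlib

open Matrix Polynomial Fin.CommRing in
lemma aux_charpoly_coeff {m : ℕ} {Ω : Type*} [CommRing Ω]
    (M : Matrix (Fin (m + 2)) (Fin (m + 2)) Ω)
    (hsupp : ∀ i j : Fin (m + 2), M i j ≠ 0 → j = i + 1) :
    ∀ i : ℕ, 0 < i → i < m + 2 → M.charpoly.coeff i = 0 := by
  have hone : (1 : Fin (m + 2)) ≠ 0 := by
    simp [Fin.ext_iff]
  have hfix : ∀ b : Fin (m + 2), b + 1 ≠ b := by
    intro b h
    exact hone (by rwa [add_eq_left] at h)
  have hdiag : ∀ b : Fin (m + 2), M b b = 0 := by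
    intro b
    by_contra h
    exact hfix b (hsupp b b h).symm
  intro i hi0 hin
  show ((Matrix.charmatrix M).det).coeff i = 0
  rw [Matrix.det_apply', finset_sum_coeff]
  apply Finset.sum_eq_zero
  intro σ _
  have hsign : ((Equiv.Perm.sign σ : ℤ) : Polynomial Ω) = C ((Equiv.Perm.sign σ : ℤ) : Ω) :=
    (C_eq_intCast _).symm
  rw [hsign, coeff_C_mul]
  suffices h : (∏ b, Matrix.charmatrix M (σ b) b).coeff i = 0 by rw [h, mul_zero]
  by_cases hσ : ∀ b, σ b = b
  · have : ∀ b : Fin (m+2), Matrix.charmatrix M (σ b) b = X := by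
      intro b
      rw [hσ b, Matrix.charmatrix_apply_eq, hdiag b, map_zero, sub_zero]
    rw [Finset.prod_congr rfl (fun b _ => this b), Finset.prod_const, coeff_X_pow]
    simp only [Finset.card_univ, Fintype.card_fin]
    rw [if_neg (by omega)]
  · push_neg at hσ
    obtain ⟨b₀, hb₀⟩ := hσ
    by_cases hall : ∀ b, σ b = b ∨ σ b = b - 1
    · have hb₀' : σ b₀ = b₀ - 1 := (hall b₀).resolve_left hb₀
      have key : ∀ k : ℕ, σ (b₀ - (k : Fin (m+2))) = b₀ - (k : Fin (m+2)) - 1 := by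
        intro k
        induction k with
        | zero => simpa using hb₀'
        | succ k ih =>
          rcases hall (b₀ - ((k+1 : ℕ) : Fin (m+2))) with h | h
          · exfalso
            have hcast : ((k+1 : ℕ) : Fin (m+2)) = (k : Fin (m+2)) + 1 := by
              push_cast; ring
            have : σ (b₀ - (k : Fin (m+2))) = σ (b₀ - ((k+1:ℕ) : Fin (m+2))) := by
              rw [ih, h, hcast]; ring
            have := σ.injective this
            rw [sub_right_inj, hcast] at this
            exact hone (by linear_combination -this)
          · exact h
      have hshift : ∀ b, σ b = b - 1 := by
        intro b
        have := key ((b₀ - b).val)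
        rwa [Fin.cast_val_eq_self, sub_sub_cancel] at this
      have hne : ∀ b : Fin (m+2), σ b ≠ b := by
        intro b h
        rw [hshift b] at h
        apply hfix b
        rw [sub_eq_iff_eq_add] at h
        linear_combination -h
      have : ∀ b : Fin (m+2), Matrix.charmatrix M (σ b) b = C (-(M (σ b) b)) := by
        intro b
        rw [Matrix.charmatrix_apply_ne _ _ _ (hne b), map_neg]
      rw [Finset.prod_congr rfl (fun b _ => this b), ← map_prod, coeff_C, if_neg (by omega)]
    · push_neg at hall
      obtain ⟨b, hb1, hb2⟩ := hall
      have hM : M (σ b) b = 0 := by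
        by_contra h
        exact hb2 (by rw [eq_sub_iff_add_eq]; exact (hsupp _ _ h).symm)
      have : Matrix.charmatrix M (σ b) b = 0 := by
        rw [Matrix.charmatrix_apply_ne _ _ _ hb1, hM, map_zero, neg_zero]
      rw [Finset.prod_eq_zero (f := fun b => M.charmatrix (σ b) b) (Finset.mem_univ b) this,
        coeff_zero]

open Matrix Polynomial in
lemma charpoly_isRoot_iff {n : ℕ} {Ω : Type*} [Field Ω] (M : Matrix (Fin n) (Fin n) Ω) (t : Ω) :
    M.charpoly.IsRoot t ↔ ∃ v, v ≠ 0 ∧ M.mulVec v = t • v := by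
  have heval : M.charpoly.eval t = (Matrix.scalar (Fin n) t - M).det := by
    show ((Matrix.charmatrix M).det).eval t = _
    rw [_root_.eval_det, Matrix.matPolyEquiv_charmatrix, eval_sub, eval_X, eval_C]
  have hmv : ∀ v : Fin n → Ω, (Matrix.scalar (Fin n) t - M) *ᵥ v = t • v - M *ᵥ v := by
    intro v
    rw [Matrix.sub_mulVec]
    congr 1
    ext i
    rw [Matrix.scalar_apply, Matrix.mulVec_diagonal]
    simp [Pi.smul_apply]
  rw [IsRoot, heval, ← Matrix.exists_mulVec_eq_zero_iff]
  constructor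
  · rintro ⟨v, hv, h⟩
    refine ⟨v, hv, ?_⟩
    rw [hmv] at h
    rw [sub_eq_zero] at h
    exact h.symm
  · rintro ⟨v, hv, h⟩
    exact ⟨v, hv, by rw [hmv, h, sub_self]⟩

open Polynomial Matrix in
theorem stmt_17 (ℓ q n r : ℕ) (hℓ : ℓ.Prime) (hq : IsPrimePow q) (hndvd : ¬ ℓ ∣ q)
    (hn : orderOf (q : ZMod ℓ) = n) (h2n : 2 ≤ n) (hnℓ : n < ℓ)
    (hr : r = padicValNat ℓ (q ^ n - 1))
    (Ω : Type*) [Field Ω] [IsAlgClosed Ω] [CharZero Ω]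
    (F P : Matrix (Fin n) (Fin n) Ω) (hF : IsUnit F.det)
    (hrel : F * P * F⁻¹ = P ^ q)
    (hunity : ∀ lam ∈ P.charpoly.roots, lam ^ ℓ ^ r = 1)
    (hnontriv : ∃ lam ∈ P.charpoly.roots, lam ≠ 1) :
    ∃ ζ : Ω, ζ ^ ℓ ^ r = 1 ∧ ζ ≠ 1 ∧
      P.charpoly.roots = (Multiset.range n).map (fun j => ζ ^ q ^ j) ∧
      ∀ i : ℕ, 0 < i → i < n → F.charpoly.coeff i = 0 := by
  classical
  obtain ⟨m, rfl⟩ : ∃ m, n = m + 2 := ⟨n - 2, by omega⟩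
  haveI : NeZero ℓ := ⟨hℓ.ne_zero⟩
  have hq2 : 2 ≤ q := hq.two_le
  -- arithmetic: if ℓ divides q^k - 1 then (m+2) ∣ k
  have hndvd' : ∀ k : ℕ, ℓ ∣ q ^ k - 1 → (m + 2) ∣ k := by
    intro k hk
    have h1 : (1:ℕ) ≤ q ^ k := Nat.one_le_pow _ _ (by omega)
    have h2 : ((q ^ k - 1 : ℕ) : ZMod ℓ) = 0 := (ZMod.natCast_eq_zero_iff _ _).mpr hk
    rw [Nat.cast_sub h1] at h2
    push_cast at h2
    have h3 : (q : ZMod ℓ) ^ k = 1 := by linear_combination h2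
    rw [← hn]
    exact orderOf_dvd_of_pow_eq_one h3
  obtain ⟨ζ, hζmem, hζne⟩ := hnontriv
  have hζu : ζ ^ ℓ ^ r = 1 := hunity ζ hζmem
  have hζ0 : ζ ≠ 0 := by
    intro h
    rw [h, zero_pow (pow_pos hℓ.pos r).ne'] at hζu
    exact zero_ne_one hζu
  have hd : orderOf ζ ∣ ℓ ^ r := orderOf_dvd_of_pow_eq_one hζu
  have hd1 : orderOf ζ ≠ 1 := fun h => hζne (orderOf_eq_one_iff.mp h)
  have hℓd : ℓ ∣ orderOf ζ := by
    obtain ⟨s, hs, hds⟩ := (Nat.dvd_prime_pow hℓ).mp hd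
    rcases Nat.eq_zero_or_pos s with h0 | h0
    · exact absurd (by rw [hds, h0, pow_zero]) hd1
    · rw [hds]; exact dvd_pow_self ℓ h0.ne'
  have hcop : Nat.Coprime (orderOf ζ) q :=
    Nat.Coprime.coprime_dvd_left hd (((Nat.Prime.coprime_iff_not_dvd hℓ).mpr hndvd).pow_left r)
  -- ζ ^ q ^ (m+2) = ζ
  have hqn1 : (1:ℕ) ≤ q ^ (m+2) := Nat.one_le_pow _ _ (by omega)
  have hζn : ζ ^ q ^ (m+2) = ζ := by
    have h1 : ℓ ^ r ∣ q ^ (m+2) - 1 := by rw [hr]; exact pow_padicValNat_dvd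
    have h3 : ζ ^ (q ^ (m+2) - 1) = 1 := orderOf_dvd_iff_pow_eq_one.mp (hd.trans h1)
    calc ζ ^ q ^ (m+2) = ζ ^ (q ^ (m+2) - 1 + 1) := by congr 1; omega
    _ = ζ ^ (q ^ (m+2) - 1) * ζ := by rw [pow_succ]
    _ = ζ := by rw [h3, one_mul]
  -- distinctness
  have hne2 : ∀ i j : ℕ, i < j → j < m + 2 → ζ ^ q ^ i ≠ ζ ^ q ^ j := by
    intro i j hij hj h
    have hle : q ^ i ≤ q ^ j := Nat.pow_le_pow_right (by omega) hij.le
    have h1 : ζ ^ q ^ i * ζ ^ (q ^ j - q ^ i) = ζ ^ q ^ i * 1 := by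
      rw [mul_one, ← pow_add, h]
      congr 1
      omega
    have hpow1 : ζ ^ (q ^ j - q ^ i) = 1 := mul_left_cancel₀ (pow_ne_zero _ hζ0) h1
    have hdvd : orderOf ζ ∣ q ^ j - q ^ i := orderOf_dvd_iff_pow_eq_one.mpr hpow1
    have heq : q ^ j - q ^ i = q ^ i * (q ^ (j - i) - 1) := by
      rw [Nat.mul_sub, mul_one, ← pow_add]
      congr 2
      omega
    rw [heq] at hdvd
    have hdvd2 : orderOf ζ ∣ q ^ (j - i) - 1 := (hcop.pow_right i).dvd_of_dvd_mul_left hdvd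
    have hmk := hndvd' (j - i) (dvd_trans hℓd hdvd2)
    have := Nat.le_of_dvd (by omega) hmk
    omega
  have hinj : ∀ i j : ℕ, i < m + 2 → j < m + 2 → ζ ^ q ^ i = ζ ^ q ^ j → i = j := by
    intro i j hi hj h
    rcases lt_trichotomy i j with hlt | heq | hlt
    · exact absurd h (hne2 i j hlt hj)
    · exact heq
    · exact absurd h.symm (hne2 j i hlt hi)
  -- eigenvector machinery
  have hCne : P.charpoly ≠ 0 := P.charpoly_monic.ne_zero
  have root_iff : ∀ t : Ω, t ∈ P.charpoly.roots ↔ ∃ v, v ≠ 0 ∧ P *ᵥ v = t • v := by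
    intro t
    rw [Polynomial.mem_roots hCne, charpoly_isRoot_iff]
  -- the shift step
  have hPF : P * F⁻¹ = F⁻¹ * P ^ q := by
    have h := congrArg (fun A => F⁻¹ * A) hrel
    simpa only [← mul_assoc, Matrix.nonsing_inv_mul F hF, one_mul] using h
  have hPpow : ∀ (t : Ω) (v : Fin (m+2) → Ω), P *ᵥ v = t • v →
      ∀ a : ℕ, (P ^ a) *ᵥ v = t ^ a • v := by
    intro t v hv a
    induction a with
    | zero => simp
    | succ a ih =>
      rw [pow_succ, ← Matrix.mulVec_mulVec, hv, Matrix.mulVec_smul, ih, smul_smul, ← pow_succ']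
  have hstep : ∀ (t : Ω) (v : Fin (m+2) → Ω), v ≠ 0 → P *ᵥ v = t • v →
      (F⁻¹ *ᵥ v ≠ 0 ∧ P *ᵥ (F⁻¹ *ᵥ v) = t ^ q • (F⁻¹ *ᵥ v)) := by
    intro t v hv0 hv
    constructor
    · intro h
      apply hv0
      have : F *ᵥ (F⁻¹ *ᵥ v) = 0 := by rw [h, Matrix.mulVec_zero]
      rwa [Matrix.mulVec_mulVec, Matrix.mul_nonsing_inv F hF, Matrix.one_mulVec] at this
    · rw [Matrix.mulVec_mulVec, hPF, ← Matrix.mulVec_mulVec, hPpow t v hv q,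
        Matrix.mulVec_smul]
  obtain ⟨w, hw0, hw⟩ := (root_iff ζ).mp hζmem
  set vseq : ℕ → (Fin (m+2) → Ω) := fun k => (F⁻¹ ^ k) *ᵥ w with hvseq
  have hvsucc : ∀ k : ℕ, vseq (k+1) = F⁻¹ *ᵥ vseq k := by
    intro k
    show (F⁻¹ ^ (k+1)) *ᵥ w = F⁻¹ *ᵥ ((F⁻¹ ^ k) *ᵥ w)
    rw [Matrix.mulVec_mulVec, ← pow_succ']
  have hv : ∀ k : ℕ, vseq k ≠ 0 ∧ P *ᵥ vseq k = ζ ^ q ^ k • vseq k := by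
    intro k
    induction k with
    | zero =>
      have h0 : vseq 0 = w := by show (F⁻¹ ^ 0) *ᵥ w = w; rw [pow_zero, Matrix.one_mulVec]
      rw [h0]
      exact ⟨hw0, by simpa using hw⟩
    | succ k ih =>
      rw [hvsucc k]
      have := hstep _ _ ih.1 ih.2
      refine ⟨this.1, ?_⟩
      rw [this.2, ← pow_mul, ← pow_succ]
  -- multiset equality
  have hroots : P.charpoly.roots = (Multiset.range (m+2)).map (fun j => ζ ^ q ^ j) := by
    set T := (Multiset.range (m+2)).map (fun j => ζ ^ q ^ j) with hT
    have hTnodup : T.Nodup := by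
      refine Multiset.Nodup.map_on ?_ (Multiset.nodup_range _)
      intro x hx y hy hxy
      exact hinj x y (Multiset.mem_range.mp hx) (Multiset.mem_range.mp hy) hxy
    have hTsub : T ≤ P.charpoly.roots := by
      rw [Multiset.le_iff_count]
      intro a
      by_cases ha : a ∈ T
      · rw [Multiset.count_eq_one_of_mem hTnodup ha]
        apply Multiset.one_le_count_iff_mem.mpr
        obtain ⟨j, hj, rfl⟩ := Multiset.mem_map.mp ha
        exact (root_iff _).mpr ⟨vseq j, (hv j).1, (hv j).2⟩
      · rw [Multiset.count_eq_zero_of_notMem ha]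
        exact Nat.zero_le _
    have hcard : Multiset.card P.charpoly.roots ≤ Multiset.card T := by
      have h1 := P.charpoly.card_roots'
      rw [Matrix.charpoly_natDegree_eq_dim] at h1
      simpa [hT] using h1
    exact (Multiset.eq_of_le_of_card_le hTsub hcard).symm
  refine ⟨ζ, hζu, hζne, hroots, ?_⟩
  -- Part 2 : charpoly of F
  set vf : Fin (m+2) → (Fin (m+2) → Ω) := fun j => vseq (j : ℕ) with hvf
  have hinj' : Function.Injective fun j : Fin (m+2) => ζ ^ q ^ (j:ℕ) := by
    intro a b hab
    exact Fin.ext (hinj _ _ a.isLt b.isLt hab)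
  have heig : ∀ j : Fin (m+2),
      Module.End.HasEigenvector (Matrix.toLin' P) (ζ ^ q ^ (j:ℕ)) (vf j) := by
    intro j
    rw [Module.End.hasEigenvector_iff]
    refine ⟨Module.End.mem_eigenspace_iff.mpr ?_, (hv _).1⟩
    rw [Matrix.toLin'_apply]
    exact (hv _).2
  have li : LinearIndependent Ω vf :=
    Module.End.eigenvectors_linearIndependent' (Matrix.toLin' P)
      (fun j : Fin (m+2) => ζ ^ q ^ (j:ℕ)) hinj' vf heig
  have hcard' : Fintype.card (Fin (m+2)) = Module.finrank Ω (Fin (m+2) → Ω) := by simp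
  set B := basisOfLinearIndependentOfCardEqFinrank li hcard' with hB
  have hBcoe : ⇑B = vf := coe_basisOfLinearIndependentOfCardEqFinrank li hcard'
  set c : Fin (m+2) → Ω := fun j => B.repr (vseq (m+2)) j with hc
  have hPvn : P *ᵥ vseq (m+2) = ζ • vseq (m+2) := by
    have := (hv (m+2)).2
    rwa [hζn] at this
  have hsum1 : ∑ j : Fin (m+2), c j • vf j = vseq (m+2) := by
    have := B.sum_repr (vseq (m+2))
    simpa only [hBcoe] using this
  have hdiff : ∑ j : Fin (m+2), ((c j * ζ ^ q ^ (j:ℕ)) - ζ * c j) • vf j = 0 := by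
    have h2 : P *ᵥ (∑ j : Fin (m+2), c j • vf j)
        = ∑ j : Fin (m+2), (c j * ζ ^ q ^ (j:ℕ)) • vf j := by
      rw [show P *ᵥ (∑ j : Fin (m+2), c j • vf j)
          = (Matrix.mulVecLin P) (∑ j : Fin (m+2), c j • vf j) from rfl]
      rw [map_sum]
      refine Finset.sum_congr rfl ?_
      intro j _
      rw [_root_.map_smul, Matrix.mulVecLin_apply, (hv (j:ℕ)).2, smul_smul, mul_comm]
    rw [hsum1, hPvn] at h2
    have h3 : (ζ • vseq (m+2) : Fin (m+2) → Ω) = ∑ j : Fin (m+2), (ζ * c j) • vf j := by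
      rw [← hsum1, Finset.smul_sum]
      refine Finset.sum_congr rfl ?_
      intro j _
      rw [smul_smul]
    rw [h3] at h2
    rw [Finset.sum_congr rfl (fun j _ => sub_smul (c j * ζ ^ q ^ (j:ℕ)) (ζ * c j) (vf j)),
      Finset.sum_sub_distrib, h2, sub_self]
  have hcj : ∀ j : Fin (m+2), j ≠ 0 → c j = 0 := by
    intro j hj
    have h1 := Fintype.linearIndependent_iff.mp li _ hdiff j
    have hzne : ζ ^ q ^ (j:ℕ) ≠ ζ := by
      have h0 : (0:ℕ) < (j:ℕ) := by
        rcases Nat.eq_zero_or_pos (j:ℕ) with h | h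
        · exact absurd (Fin.ext (by simp [h])) hj
        · exact h
      have := hne2 0 (j:ℕ) h0 j.isLt
      simpa using this.symm
    have h2 : c j * (ζ ^ q ^ (j:ℕ) - ζ) = 0 := by linear_combination h1
    rcases mul_eq_zero.mp h2 with h | h
    · exact h
    · exact absurd (sub_eq_zero.mp h) hzne
  have hvn : vseq (m+2) = c 0 • vseq 0 := by
    conv_lhs => rw [← hsum1]
    rw [Finset.sum_eq_single 0]
    · show c 0 • vseq ((0 : Fin (m+2)) : ℕ) = c 0 • vseq 0
      norm_num
    · intro b _ hb
      rw [hcj b hb, zero_smul]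
    · intro h
      exact absurd (Finset.mem_univ 0) h
  have hc00 : c 0 ≠ 0 := by
    intro h
    apply (hv (m+2)).1
    rw [hvn, h, zero_smul]
  have hFstep : ∀ k : ℕ, F *ᵥ vseq (k+1) = vseq k := by
    intro k
    rw [hvsucc k, Matrix.mulVec_mulVec, Matrix.mul_nonsing_inv F hF, Matrix.one_mulVec]
  have hF0 : F *ᵥ vseq 0 = (c 0)⁻¹ • vseq (m+1) := by
    have h1 : F *ᵥ vseq (m+2) = vseq (m+1) := hFstep (m+1)
    rw [hvn, Matrix.mulVec_smul] at h1
    rw [← h1, smul_smul, inv_mul_cancel₀ hc00, one_smul]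
  set M' := LinearMap.toMatrix B B (Matrix.toLin' F) with hM'def
  have hM' : ∀ i j : Fin (m+2), M' i j ≠ 0 → j = i + 1 := by
    intro i j hne
    rw [hM'def, LinearMap.toMatrix_apply, Matrix.toLin'_apply, hBcoe] at hne
    by_cases hj : j = 0
    · subst hj
      have hvf0 : vf (0 : Fin (m+2)) = vseq 0 := by simp [hvf]
      rw [hvf0, hF0] at hne
      have hlast : vseq (m+1) = B ⟨m+1, by omega⟩ := by
        rw [hBcoe]
      rw [hlast, _root_.map_smul, B.repr_self] at hne
      have : i = ⟨m+1, by omega⟩ := by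
        by_contra hcon
        apply hne
        rw [Finsupp.smul_apply, Finsupp.single_apply,
          if_neg (fun h : (⟨m+1, by omega⟩ : Fin (m+2)) = i => hcon h.symm), smul_zero]
      rw [this]
      apply Fin.ext
      rw [Fin.val_add, Fin.val_zero, Fin.val_one]
      show (0:ℕ) = (m+2) % (m+2)
      rw [Nat.mod_self]
    · have hjv : ((j:ℕ) - 1) + 1 = (j:ℕ) := by
        have : (j:ℕ) ≠ 0 := fun h => hj (Fin.ext (by simp [h]))
        omega
      have hvfj : vf j = vseq (((j:ℕ) - 1) + 1) := by rw [hvf]; simp [hjv]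
      rw [hvfj, hFstep] at hne
      have hprev : vseq ((j:ℕ) - 1) = B ⟨(j:ℕ) - 1, by omega⟩ := by
        rw [hBcoe]
      rw [hprev, B.repr_self] at hne
      have : i = ⟨(j:ℕ) - 1, by omega⟩ := by
        by_contra hcon
        apply hne
        rw [Finsupp.single_apply,
          if_neg (fun h : (⟨(j:ℕ) - 1, by omega⟩ : Fin (m+2)) = i => hcon h.symm)]
      rw [this]
      apply Fin.ext
      rw [Fin.val_add, Fin.val_one]
      show (j:ℕ) = ((j:ℕ) - 1 + 1) % (m+2)
      rw [hjv, Nat.mod_eq_of_lt j.isLt]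
  have hcharF : F.charpoly = M'.charpoly := by
    have h1 : M'.charpoly = (Matrix.toLin' F).charpoly := LinearMap.charpoly_toMatrix _ _
    have h2 : F.charpoly = (Matrix.toLin' F).charpoly := by
      conv_lhs => rw [← LinearMap.toMatrix'_toLin' F]
      rw [← LinearMap.toMatrix_eq_toMatrix']
      exact LinearMap.charpoly_toMatrix _ _
    rw [h2, h1]
  intro i hi0 hin
  rw [hcharF]
  exact aux_charpoly_coeff M' hM' i hi0 hin
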